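/- Let (B, L) be a Banach SNL space with Banach SNL dual (B*, L̃) and suppose L is surjective onto B*. Then B is reflexive and (B**, L^{TT}) is a Banach SNL dual of (B*, L̃), where L^{TT} is the double adjoint of L. -/

import Mathlib

open NormedSpace

noncomputable instance instNormedAddCommGroupStrongDualStrongDualReal {E : Type*}
    [NormedAddCommGroup E] [NormedSpace ℝ E] :
    NormedAddCommGroup (StrongDual ℝ (StrongDual ℝ E)) := inferInstance

noncomputable instance instNormedSpaceStrongDualStrongDualReal {E : Type*}
    [NormedAddCommGroup E] [NormedSpace ℝ E] :
    NormedSpace ℝ (StrongDual ℝ (StrongDual ℝ E)) := inferInstance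

noncomputable def qL {B : Type*} [NormedAddCommGroup B] [NormedSpace ℝ B]
    (L : B →L[ℝ] StrongDual ℝ B) (b : B) : ℝ := (1 / 2) * L b b

/-- The Banach-space adjoint `L^T : B** → B*` of `L : B → B*`, `L^T b** = b** ∘ L`. -/
noncomputable def Ltrans {B : Type*} [NormedAddCommGroup B] [NormedSpace ℝ B]
    (L : B →L[ℝ] StrongDual ℝ B) : StrongDual ℝ (StrongDual ℝ B) →L[ℝ] StrongDual ℝ B :=
  (ContinuousLinearMap.compL ℝ B (StrongDual ℝ B) ℝ).flip L

/-- The double adjoint `L^{TT} : B** → B***` of `L`, `L^{TT} b** = b** ∘ L^T`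
(viewing `L^{TT}` as the adjoint of `L^T : B** → B*`). -/
noncomputable def Ltranstrans {B : Type*} [NormedAddCommGroup B] [NormedSpace ℝ B]
    (L : B →L[ℝ] StrongDual ℝ B) :
    StrongDual ℝ (StrongDual ℝ B) →L[ℝ] StrongDual ℝ (StrongDual ℝ (StrongDual ℝ B)) :=
  (ContinuousLinearMap.compL ℝ (StrongDual ℝ (StrongDual ℝ B)) (StrongDual ℝ B) ℝ).flip (Ltrans L)

lemma ltrans_apply {B : Type*} [NormedAddCommGroup B] [NormedSpace ℝ B]
    (L : B →L[ℝ] StrongDual ℝ B) (F : StrongDual ℝ (StrongDual ℝ B)) (x : B) :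
    Ltrans L F x = F (L x) := rfl

lemma ltranstrans_apply {B : Type*} [NormedAddCommGroup B] [NormedSpace ℝ B]
    (L : B →L[ℝ] StrongDual ℝ B) (P Q : StrongDual ℝ (StrongDual ℝ B)) :
    Ltranstrans L Q P = Q (Ltrans L P) := rfl

lemma ltrans_iota {B : Type*} [NormedAddCommGroup B] [NormedSpace ℝ B]
    (L : B →L[ℝ] StrongDual ℝ B) (hsym : ∀ b c : B, L c b = L b c) (b : B) :
    Ltrans L (inclusionInDoubleDual ℝ B b) = L b := by
  ext x
  simp only [ltrans_apply, dual_def]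
  exact hsym b x

theorem stmt17 {B : Type*} [NormedAddCommGroup B] [NormedSpace ℝ B] [CompleteSpace B]
    [Nontrivial B]
    (L : B →L[ℝ] StrongDual ℝ B) (hL : ‖L‖ ≤ 1)
    (hsym : ∀ b c : B, L c b = L b c)
    (Lt : StrongDual ℝ B →L[ℝ] StrongDual ℝ (StrongDual ℝ B)) (hLt : ‖Lt‖ ≤ 1)
    (hsymt : ∀ p q : StrongDual ℝ B, Lt q p = Lt p q)
    (hdual : ∀ b : B, Lt (L b) = inclusionInDoubleDual ℝ B b)
    (hsurj : Function.Surjective L) :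
    -- `B` is reflexive
    Function.Surjective (inclusionInDoubleDual ℝ B) ∧
    -- `(B**, L^{TT})` is a Banach SNL space ...
    ‖Ltranstrans L‖ ≤ 1 ∧
    (∀ p q : StrongDual ℝ (StrongDual ℝ B), Ltranstrans L q p = Ltranstrans L p q) ∧
    -- ... and is a Banach SNL dual of `(B*, L̃)`
    (∀ c' : StrongDual ℝ B,
      Ltranstrans L (Lt c') = inclusionInDoubleDual ℝ (StrongDual ℝ B) c') := by
  have hrefl : Function.Surjective (inclusionInDoubleDual ℝ B) := by
    intro F
    obtain ⟨b, hb⟩ := hsurj (Ltrans L F)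
    refine ⟨b, ?_⟩
    ext q
    obtain ⟨c, hc⟩ := hsurj q
    have h1 : (inclusionInDoubleDual ℝ B b) q = L b c := by
      rw [dual_def, ← hc]; exact hsym b c
    rw [h1, hb, ltrans_apply, hc]
  have hnormt : ‖Ltrans L‖ ≤ 1 := by
    apply ContinuousLinearMap.opNorm_le_bound _ zero_le_one
    intro F
    calc ‖Ltrans L F‖ = ‖F.comp L‖ := rfl
      _ ≤ ‖F‖ * ‖L‖ := ContinuousLinearMap.opNorm_comp_le _ _
      _ ≤ ‖F‖ * 1 := by gcongr
      _ = 1 * ‖F‖ := by ring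
  refine ⟨hrefl, ?_, ?_, ?_⟩
  · apply ContinuousLinearMap.opNorm_le_bound _ zero_le_one
    intro P
    calc ‖Ltranstrans L P‖ = ‖P.comp (Ltrans L)‖ := rfl
      _ ≤ ‖P‖ * ‖Ltrans L‖ := ContinuousLinearMap.opNorm_comp_le _ _
      _ ≤ ‖P‖ * 1 := by gcongr
      _ = 1 * ‖P‖ := by ring
  · intro P Q
    obtain ⟨b, rfl⟩ := hrefl P
    obtain ⟨c, rfl⟩ := hrefl Q
    simp only [ltranstrans_apply, ltrans_iota L hsym, dual_def]
    exact hsym c b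
  · intro c'
    ext P
    obtain ⟨b, rfl⟩ := hrefl P
    rw [ltranstrans_apply, ltrans_iota L hsym, dual_def,
      dual_def, hsymt, hdual, dual_def]
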